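/- Let A be a C*-algebra and let I_1, ..., I_n and K be closed two-sided ideals of A such that a·b ∈ K whenever a ∈ I_i, b ∈ I_j and i ≠ j. Then for any elements a_1, ..., a_n with a_i ∈ I_i, the sum a_1 + ... + a_n belongs to K if and only if a_i ∈ K for every i. -/

import Mathlib

/-- In a C*-algebra, a closed two-sided ideal contains `x` whenever it contains
`star x * x`. -/
lemma TwoSidedIdeal.mem_of_star_mul_self_mem_aux
    {A : Type*} [NormedRing A] [StarRing A] [CStarRing A] [NormedAlgebra ℂ A]
    [CompleteSpace A] [StarModule ℂ A]
    (K : TwoSidedIdeal A) (hK : IsClosed (K : Set A))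
    {x : A} (hx : star x * x ∈ K) : x ∈ K := by
  letI : CStarAlgebra A := ⟨⟩
  letI : PartialOrder A := CStarAlgebra.spectralOrder A
  letI : StarOrderedRing A := CStarAlgebra.spectralOrderedRing A
  set b : A := star x * x with hb
  have hb0 : (0 : A) ≤ b := star_mul_self_nonneg x
  have hbsa : IsSelfAdjoint b := .star_mul_self x
  have hspec : ∀ s ∈ quasispectrum ℝ b, 0 ≤ s :=
    quasispectrum_nonneg_of_nonneg b hb0
  have key : ∀ t : ℝ, 0 < t → ∃ y ∈ K, ‖x - y‖ ^ 2 ≤ t / 4 := by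
    intro t ht
    set f : ℝ → ℝ := fun s => s / (t + s) with hf
    have hcont : ContinuousOn f (quasispectrum ℝ b) := by
      apply ContinuousOn.div continuousOn_id (by fun_prop)
      intro s hs
      have := hspec s hs
      positivity
    have hf0 : f 0 = 0 := by simp [hf]
    have hid : ContinuousOn (fun s : ℝ => s) (quasispectrum ℝ b) := continuousOn_id
    have hc1 : ContinuousOn (fun s => s * f s) (quasispectrum ℝ b) := hid.mul hcont
    have hc2 : ContinuousOn (fun s => s * f s * f s) (quasispectrum ℝ b) := hc1.mul hcont
    set u : A := cfcₙ f b with hu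
    have husa : IsSelfAdjoint u := cfcₙ_predicate f b
    have hbu : b * u = cfcₙ (fun s => s * f s) b := by
      rw [hu]
      nth_rw 1 [← cfcₙ_id' ℝ b]
      exact (cfcₙ_mul _ f b hid (by simp) hcont hf0).symm
    have hub : u * b = cfcₙ (fun s => s * f s) b := by
      rw [hu]
      nth_rw 2 [← cfcₙ_id' ℝ b]
      rw [← cfcₙ_mul f _ b hcont hf0 hid (by simp)]
      exact cfcₙ_congr fun s _ => mul_comm (f s) s
    have hubu : u * b * u = cfcₙ (fun s => s * f s * f s) b := by
      rw [hub, hu]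
      exact (cfcₙ_mul _ f b hc1 (by simp) hcont hf0).symm
    have hsub : b - b * u = cfcₙ (fun s => s - s * f s) b := by
      rw [hbu]
      nth_rw 1 [← cfcₙ_id' ℝ b]
      exact (cfcₙ_sub _ _ b hid (by simp) hc1 (by simp)).symm
    have huK : u ∈ K := by
      have heq : u = t⁻¹ • (b - b * u) := by
        rw [hsub, hu, ← cfcₙ_smul t⁻¹ (fun s => s - s * f s) b (hid.sub hc1) (by simp)]
        apply cfcₙ_congr
        intro s hs
        have hs0 := hspec s hs
        have hts : (0:ℝ) < t + s := by positivity
        simp only [hf, smul_eq_mul]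
        field_simp
        ring
      rw [heq, Algebra.smul_def]
      exact K.mul_mem_left _ _ (K.sub_mem hx (K.mul_mem_right _ _ hx))
    have hexp : star (x - x * u) * (x - x * u)
        = cfcₙ (fun s => s * (1 - f s) ^ 2) b := by
      have h1 : star (x - x * u) * (x - x * u)
          = b - b * u - u * b + u * b * u := by
        rw [star_sub, star_mul, husa.star_eq, hb]
        noncomm_ring
      have h2 : b - b * u - u * b + u * b * u
          = cfcₙ (fun s => s - s * f s - s * f s + s * f s * f s) b := by
        rw [hubu, hsub, hub,
          ← cfcₙ_sub (fun s => s - s * f s) (fun s => s * f s) b (hid.sub hc1) (by simp) hc1 (by simp),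
          ← cfcₙ_add (fun s => s - s * f s - s * f s) (fun s => s * f s * f s) b ((hid.sub hc1).sub hc1) (by simp) hc2 (by simp)]
      rw [h1, h2]
      exact cfcₙ_congr fun s _ => by ring
    have hnorm : ‖x - x * u‖ ^ 2 ≤ t / 4 := by
      rw [sq, ← CStarRing.norm_star_mul_self, hexp]
      apply norm_cfcₙ_le
      intro s hs
      have hs0 := hspec s hs
      have hts : (0:ℝ) < t + s := by positivity
      have heqg : s * (1 - f s) ^ 2 = s * t ^ 2 / (t + s) ^ 2 := by
        simp only [hf]
        field_simp
        ring
      rw [heqg, Real.norm_eq_abs, abs_of_nonneg (by positivity),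
        div_le_div_iff₀ (by positivity) (by norm_num)]
      nlinarith [sq_nonneg (t - s)]
    exact ⟨x * u, K.mul_mem_left _ _ huK, hnorm⟩
  have hcl : x ∈ closure (K : Set A) := by
    rw [Metric.mem_closure_iff]
    intro ε hε
    obtain ⟨y, hyK, hy⟩ := key (ε ^ 2) (by positivity)
    refine ⟨y, hyK, ?_⟩
    rw [dist_eq_norm]
    nlinarith [norm_nonneg (x - y)]
  rwa [hK.closure_eq] at hcl

/-- A closed two-sided ideal of a C*-algebra is star-closed. -/
lemma TwoSidedIdeal.star_mem_aux
    {A : Type*} [NormedRing A] [StarRing A] [CStarRing A] [NormedAlgebra ℂ A]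
    [CompleteSpace A] [StarModule ℂ A]
    (K : TwoSidedIdeal A) (hK : IsClosed (K : Set A))
    {x : A} (hx : x ∈ K) : star x ∈ K :=
  K.mem_of_star_mul_self_mem_aux hK (by simpa using K.mul_mem_right x (star x) hx)

/-- Lemma 2.4(b) (injectivity part) of the paper: if `I₁, …, Iₙ, K` are closed two-sided
ideals of a C*-algebra `A` such that `IᵢIⱼ ⊆ K` for `i ≠ j`, then for `aᵢ ∈ Iᵢ` the sum
`a₁ + ⋯ + aₙ` lies in `K` if and only if every `aᵢ` lies in `K`. -/
theorem sum_mem_iff_forall_mem_of_pairwise_mul_mem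
    {A : Type*} [NormedRing A] [StarRing A] [CStarRing A] [NormedAlgebra ℂ A]
    [CompleteSpace A] [StarModule ℂ A]
    (n : ℕ) (I : Fin n → TwoSidedIdeal A) (K : TwoSidedIdeal A)
    (hIclosed : ∀ i, IsClosed (I i : Set A)) (hKclosed : IsClosed (K : Set A))
    (hmul : ∀ i j, i ≠ j → ∀ a ∈ I i, ∀ b ∈ I j, a * b ∈ K)
    (a : Fin n → A) (ha : ∀ i, a i ∈ I i) :
    (∑ i, a i) ∈ K ↔ ∀ i, a i ∈ K := by
  constructor
  · intro hsum i
    have hstar : star (a i) ∈ I i := (I i).star_mem_aux (hIclosed i) (ha i)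
    have h1 : star (a i) * (∑ j, a j) ∈ K := K.mul_mem_left _ _ hsum
    rw [Finset.mul_sum] at h1
    have h2 : ∑ j ∈ Finset.univ.erase i, star (a i) * a j ∈ K :=
      K.finsetSum_mem _ _ fun j hj =>
        hmul i j (Finset.ne_of_mem_erase hj).symm _ hstar _ (ha j)
    have h3 : star (a i) * a i ∈ K := by
      have heq : star (a i) * a i
          = (∑ j, star (a i) * a j) - ∑ j ∈ Finset.univ.erase i, star (a i) * a j := by
        rw [eq_sub_iff_add_eq]
        exact Finset.add_sum_erase Finset.univ (fun j => star (a i) * a j) (Finset.mem_univ i)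
      rw [heq]
      exact K.sub_mem h1 h2
    exact K.mem_of_star_mul_self_mem_aux hKclosed h3
  · intro h
    exact K.finsetSum_mem _ _ fun i _ => h i
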